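/- Let L > 0, C₀ > 0, and let (λ_n)_{n ≥ 1} be complex numbers with |λ_n − (2nπ/L + i (ln 3)/L)| ≤ C₀/n for all n ≥ 1. Define φ_n, φ̃_n ∈ L²(0,L) by φ_n(x) := e^{iλ_n x} and φ̃_n(x) := e^{−iλ_n x}. Then there exists a constant C > 0 such that for all n ≥ 1: |‖φ_n‖²_{L²(0,L)} − 4L/(9 ln 3)| ≤ C/n, |‖φ̃_n‖²_{L²(0,L)} − 4L/(ln 3)| ≤ C/n, and |⟨φ_n, φ̃_n⟩| ≤ C/n, where ⟨f, g⟩ := ∫₀^L f(x) conj(g(x)) dx. -/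

import Mathlib

open Complex Real

lemma my_exp_sub_exp (u v K : ℝ) (hu : Real.exp u ≤ K) (hv : Real.exp v ≤ K) :
    |Real.exp u - Real.exp v| ≤ |u - v| * K := by
  wlog h : v ≤ u generalizing u v
  · rw [abs_sub_comm, abs_sub_comm u v]; exact this v u hv hu (le_of_not_ge h)
  rw [_root_.abs_of_nonneg (sub_nonneg.2 (Real.exp_le_exp.2 h)),
    _root_.abs_of_nonneg (sub_nonneg.2 h)]
  have h1 : Real.exp v = Real.exp u * Real.exp (v - u) := by
    rw [← Real.exp_add]; ring_nf
  have h2 := Real.add_one_le_exp (v - u)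
  have h3 : Real.exp (v - u) ≤ 1 := Real.exp_le_one_iff.2 (by linarith)
  nlinarith [Real.exp_pos u, Real.exp_pos (v - u)]

lemma my_integral_exp_mul (a b c : ℝ) (hc : c ≠ 0) :
    ∫ x in a..b, Real.exp (c * x) = (Real.exp (c * b) - Real.exp (c * a)) / c := by
  rw [intervalIntegral.integral_comp_mul_left (fun x => Real.exp x) hc]
  simp [smul_eq_mul]
  ring

set_option maxHeartbeats 1000000 in
/-- Norm asymptotics for the exponentials `φ_n(x) = e^{iλ_n x}`, `φ̃_n(x) = e^{−iλ_n x}` in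
`L²(0, L)`, where `λ_n = 2nπ/L + i ln(3)/L + O(1/n)`:
`‖φ_n‖² = 4L/(9 ln 3) + O(1/n)`, `‖φ̃_n‖² = 4L/ln 3 + O(1/n)`, `⟨φ_n, φ̃_n⟩ = O(1/n)`. -/
theorem norm_asymptotics (L : ℝ) (hL : 0 < L) (C₀ : ℝ) (hC₀ : 0 < C₀) (lam : ℕ → ℂ)
    (hlam : ∀ n : ℕ, 1 ≤ n →
      ‖(lam n - (2 * (n : ℂ) * (Real.pi : ℂ) / (L : ℂ) +
        Complex.I * (Real.log 3 : ℂ) / (L : ℂ)))‖ ≤ C₀ / n) :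
    ∃ C > (0:ℝ), ∀ n : ℕ, 1 ≤ n →
      |(∫ x in (0:ℝ)..L, ‖Complex.exp (Complex.I * lam n * x)‖ ^ 2) -
          4 * L / (9 * Real.log 3)| ≤ C / n ∧
      |(∫ x in (0:ℝ)..L, ‖Complex.exp (-(Complex.I) * lam n * x)‖ ^ 2) -
          4 * L / Real.log 3| ≤ C / n ∧
      ‖(∫ x in (0:ℝ)..L,
          Complex.exp (Complex.I * lam n * x) *
            (starRingEnd ℂ) (Complex.exp (-(Complex.I) * lam n * x)))‖ ≤ C / n := by
  have h3 : (0:ℝ) < Real.log 3 := Real.log_pos (by norm_num)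
  have hπ := Real.pi_pos
  set b₀ : ℝ := Real.log 3 / L with hb₀def
  have hb₀ : 0 < b₀ := div_pos h3 hL
  set K : ℝ := Real.exp (2 * (b₀ + C₀) * L) with hKdef
  have hK : 0 < K := Real.exp_pos _
  refine ⟨2*C₀*L^2*K + 9*(2*C₀*L^2*K) + L/Real.pi + L^2*C₀/Real.pi + 1, by positivity, ?_⟩
  intro n hn
  have hn0 : (0:ℝ) < n := by exact_mod_cast hn
  set a : ℝ := (lam n).re with hadef
  set b : ℝ := (lam n).im with hbdef
  -- re/im bounds
  have hE : (2*(n:ℂ)*(Real.pi:ℂ)/(L:ℂ) + Complex.I*(Real.log 3:ℂ)/(L:ℂ))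
      = ((2*n*Real.pi/L : ℝ):ℂ) + ((Real.log 3 / L : ℝ):ℂ)*Complex.I := by
    push_cast; ring
  have hz := hlam n hn
  rw [hE] at hz
  have hre : |a - 2*n*Real.pi/L| ≤ C₀/n := by
    have h1 := Complex.abs_re_le_norm
      (lam n - (((2*n*Real.pi/L : ℝ):ℂ) + ((Real.log 3 / L : ℝ):ℂ)*Complex.I))
    simp only [Complex.sub_re, Complex.add_re, Complex.ofReal_re, Complex.mul_re,
      Complex.I_re, Complex.I_im, Complex.ofReal_im, mul_zero, mul_one, zero_sub,
      sub_zero, add_zero, zero_add] at h1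
    calc |a - 2*n*Real.pi/L| ≤ ‖(_ : ℂ)‖ := by
          convert h1 using 3 <;> ring
      _ ≤ C₀/n := hz
  have him : |b - b₀| ≤ C₀/n := by
    have h1 := Complex.abs_im_le_norm
      (lam n - (((2*n*Real.pi/L : ℝ):ℂ) + ((Real.log 3 / L : ℝ):ℂ)*Complex.I))
    simp only [Complex.sub_im, Complex.add_im, Complex.ofReal_im, Complex.mul_im,
      Complex.I_re, Complex.I_im, Complex.ofReal_re, mul_zero, mul_one, zero_add,
      add_zero, zero_mul] at h1
    calc |b - b₀| ≤ ‖(_ : ℂ)‖ := by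
          convert h1 using 3 <;> simp [hb₀def]
      _ ≤ C₀/n := hz
  have hn1 : (1:ℝ) ≤ n := by exact_mod_cast hn
  have hCn : C₀/n ≤ C₀ := by
    rw [div_le_iff₀ hn0]; nlinarith
  have hb_abs : |b| ≤ b₀ + C₀ := by
    have := abs_le.1 (him.trans hCn)
    rw [abs_le]; constructor <;> nlinarith
  -- integrability
  have hcont : ∀ c : ℝ, IntervalIntegrable (fun x => Real.exp (c*x)) MeasureTheory.volume 0 L :=
    fun c => (Real.continuous_exp.comp (continuous_const.mul continuous_id)).intervalIntegrable 0 L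
  -- pointwise difference bound
  have hpt : ∀ s : ℝ, s = 1 ∨ s = -1 → ∀ x ∈ Set.uIoc (0:ℝ) L,
      ‖Real.exp ((s*2*b)*x) - Real.exp ((s*2*b₀)*x)‖ ≤ 2*(C₀/n)*L*K := by
    intro s hs x hx
    rw [Set.uIoc_of_le hL.le] at hx
    obtain ⟨hx0, hxL⟩ := hx
    have hs1 : |s| = 1 := by rcases hs with h | h <;> simp [h]
    have hexp : ∀ t : ℝ, |t| ≤ b₀ + C₀ → Real.exp ((s*2*t)*x) ≤ K := by
      intro t ht
      rw [hKdef]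
      apply Real.exp_le_exp.2
      have h1 : |s*2*t*x| ≤ 2*(b₀+C₀)*L := by
        rw [abs_mul, abs_mul, abs_mul, hs1, _root_.abs_of_nonneg hx0.le]
        have : |(2:ℝ)| = 2 := by norm_num
        rw [this]
        nlinarith [abs_nonneg t]
      linarith [abs_le.1 h1]
    have h1 := my_exp_sub_exp ((s*2*b)*x) ((s*2*b₀)*x) K
      (hexp b hb_abs) (hexp b₀ (by rw [_root_.abs_of_nonneg hb₀.le]; linarith))
    rw [Real.norm_eq_abs]
    refine h1.trans ?_
    have h2 : (s*2*b)*x - (s*2*b₀)*x = (s*2*x)*(b-b₀) := by ring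
    rw [h2, abs_mul, abs_mul, abs_mul, hs1, _root_.abs_of_nonneg hx0.le]
    have h4 : |(2:ℝ)| = 2 := by norm_num
    rw [h4]
    have hK' := hK.le
    nlinarith [mul_le_mul_of_nonneg_right
      (mul_le_mul hxL him (abs_nonneg (b - b₀)) hL.le) hK',
      div_nonneg hC₀.le hn0.le]
  -- the generic difference-of-integrals bound
  have hdiff : ∀ s : ℝ, s = 1 ∨ s = -1 →
      |(∫ x in (0:ℝ)..L, Real.exp ((s*2*b)*x)) - ∫ x in (0:ℝ)..L, Real.exp ((s*2*b₀)*x)|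
        ≤ 2*C₀*L^2*K/n := by
    intro s hs
    rw [← intervalIntegral.integral_sub (hcont _) (hcont _)]
    have h1 := intervalIntegral.norm_integral_le_of_norm_le_const (hpt s hs)
    rw [Real.norm_eq_abs] at h1
    refine h1.trans ?_
    rw [sub_zero, _root_.abs_of_nonneg hL.le]
    refine le_of_eq ?_
    field_simp
  -- exact reference integrals
  have hexp9 : Real.exp (2 * Real.log 3) = 9 := by
    rw [two_mul, Real.exp_add, Real.exp_log (by norm_num : (0:ℝ) < 3)]; norm_num
  have hb₀L : b₀ * L = Real.log 3 := by
    rw [hb₀def]; field_simp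
  have exact1 : ∫ x in (0:ℝ)..L, Real.exp ((-1*2*b₀)*x) = 4*L/(9*Real.log 3) := by
    rw [my_integral_exp_mul _ _ _ (ne_of_lt (by nlinarith : (-1*2*b₀:ℝ) < 0))]
    have h9 : Real.exp ((-1*2*b₀)*L) = 1/9 := by
      rw [show (-1*2*b₀)*L = -(2*Real.log 3) by rw [← hb₀L]; ring, Real.exp_neg, hexp9]
      norm_num
    rw [h9, mul_zero, Real.exp_zero, hb₀def]
    rw [div_eq_div_iff (by positivity) (by positivity)]
    field_simp
    ring
  have exact2 : ∫ x in (0:ℝ)..L, Real.exp ((1*2*b₀)*x) = 4*L/Real.log 3 := by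
    rw [my_integral_exp_mul _ _ _ (ne_of_gt (by nlinarith : (0:ℝ) < 1*2*b₀))]
    have h9 : Real.exp ((1*2*b₀)*L) = 9 := by
      rw [show (1*2*b₀)*L = 2*Real.log 3 by rw [← hb₀L]; ring, hexp9]
    rw [h9, mul_zero, Real.exp_zero, hb₀def]
    rw [div_eq_div_iff (by positivity) h3.ne']
    field_simp
    ring
  have hCfin : 2*C₀*L^2*K/(n:ℝ) ≤
      (2*C₀*L^2*K + 9*(2*C₀*L^2*K) + L/Real.pi + L^2*C₀/Real.pi + 1)/n := by
    gcongr
    have h1 : 0 ≤ 9*(2*C₀*L^2*K) := by positivity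
    have h2 : 0 ≤ L/Real.pi := by positivity
    have h3' : 0 ≤ L^2*C₀/Real.pi := by positivity
    linarith
  refine ⟨?_, ?_, ?_⟩
  · have e1 : ∀ x:ℝ, ‖Complex.exp (Complex.I * lam n * x)‖^2
        = Real.exp ((-1*2*b)*x) := by
      intro x
      rw [Complex.norm_exp, sq, ← Real.exp_add]
      congr 1
      simp [Complex.mul_re, Complex.mul_im]
      ring
    simp only [e1]
    calc |(∫ x in (0:ℝ)..L, Real.exp ((-1*2*b)*x)) - 4*L/(9*Real.log 3)|
        = |(∫ x in (0:ℝ)..L, Real.exp ((-1*2*b)*x))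
            - ∫ x in (0:ℝ)..L, Real.exp ((-1*2*b₀)*x)| := by rw [exact1]
      _ ≤ 2*C₀*L^2*K/n := hdiff (-1) (Or.inr rfl)
      _ ≤ _ := hCfin
  · have e2 : ∀ x:ℝ, ‖Complex.exp (-(Complex.I) * lam n * x)‖^2
        = Real.exp ((1*2*b)*x) := by
      intro x
      rw [Complex.norm_exp, sq, ← Real.exp_add]
      congr 1
      simp [Complex.mul_re, Complex.mul_im]
      ring
    simp only [e2]
    calc |(∫ x in (0:ℝ)..L, Real.exp ((1*2*b)*x)) - 4*L/Real.log 3|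
        = |(∫ x in (0:ℝ)..L, Real.exp ((1*2*b)*x))
            - ∫ x in (0:ℝ)..L, Real.exp ((1*2*b₀)*x)| := by rw [exact2]
      _ ≤ 2*C₀*L^2*K/n := hdiff 1 (Or.inl rfl)
      _ ≤ _ := hCfin
  · have e3 : ∀ x:ℝ, Complex.exp (Complex.I * lam n * x)
        * (starRingEnd ℂ) (Complex.exp (-(Complex.I) * lam n * x))
        = Complex.exp ((2*(a:ℂ)*Complex.I) * x) := by
      intro x
      rw [← Complex.exp_conj, ← Complex.exp_add]
      congr 1
      have h := Complex.add_conj (lam n)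
      push_cast at h
      have hc : (starRingEnd ℂ) (lam n) = 2*(a:ℂ) - lam n := by
        rw [hadef]; linear_combination h
      simp only [map_mul, map_neg, Complex.conj_I, Complex.conj_ofReal, hc]
      ring
    simp only [e3]
    have htail : L/Real.pi/(n:ℝ) + L^2*C₀/Real.pi/(n:ℝ)
        ≤ (2*C₀*L^2*K + 9*(2*C₀*L^2*K) + L/Real.pi + L^2*C₀/Real.pi + 1)/n := by
      rw [← add_div, div_le_div_iff₀ hn0 hn0]
      have h1 : 0 ≤ 2*C₀*L^2*K := by positivity
      have h2 : 0 ≤ 9*(2*C₀*L^2*K) := by positivity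
      nlinarith
    by_cases hcase : C₀ * L ≤ (n:ℝ)^2 * Real.pi
    · have ha : Real.pi * n / L ≤ a := by
        have h1 := (abs_le.1 hre).1
        have h2 : C₀ / n ≤ n * Real.pi / L := by
          rw [div_le_div_iff₀ hn0 hL]
          nlinarith
        have : 2*n*Real.pi/L - n*Real.pi/L = Real.pi*n/L := by ring
        linarith
      have ha0 : 0 < a := lt_of_lt_of_le (by positivity) ha
      have hc0 : (2*(a:ℂ)*Complex.I) ≠ 0 := by
        simp [Complex.ext_iff, ha0.ne']
      rw [integral_exp_mul_complex hc0, norm_div]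
      have habs : ‖(2*(a:ℂ)*Complex.I)‖ = 2*a := by
        simp [_root_.abs_of_pos ha0]
      have hone : ‖(Complex.exp ((2*(a:ℂ)*Complex.I)*(L:ℂ)))‖ = 1 := by
        rw [Complex.norm_exp]
        norm_num [Complex.mul_re, Complex.mul_im]
      have hnum : ‖(Complex.exp ((2*(a:ℂ)*Complex.I)*(L:ℂ))
          - Complex.exp ((2*(a:ℂ)*Complex.I)*((0:ℝ):ℂ)))‖ ≤ 2 := by
        refine (norm_sub_le _ _).trans ?_
        rw [hone]
        norm_num
      rw [habs]
      have hstep : ‖(Complex.exp (2*(a:ℂ)*Complex.I*(L:ℂ))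
          - Complex.exp (2*(a:ℂ)*Complex.I*((0:ℝ):ℂ)))‖ / (2*a) ≤ 2/(2*a) := by
        gcongr
      refine hstep.trans ?_
      have hfin : 2/(2*a) ≤ L/Real.pi/(n:ℝ) := by
        rw [div_le_div_iff₀ (by positivity) (by positivity)]
        have h5 : (n:ℝ) ≤ a*L/Real.pi := by
          rw [le_div_iff₀ hπ]
          rw [div_le_iff₀ hL] at ha
          linarith
        have h6 : L/Real.pi*(2*a) = 2*(a*L/Real.pi) := by ring
        linarith
      refine hfin.trans ?_
      refine le_trans ?_ htail
      have : 0 ≤ L^2*C₀/Real.pi/(n:ℝ) := by positivity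
      linarith
    · push_neg at hcase
      have hb1 := intervalIntegral.norm_integral_le_of_norm_le_const
        (C := 1) (f := fun x : ℝ => Complex.exp ((2*(a:ℂ)*Complex.I) * x))
        (a := 0) (b := L) ?_
      · refine hb1.trans ?_
        rw [sub_zero, _root_.abs_of_nonneg hL.le, one_mul]
        have hL2 : L ≤ L^2*C₀/Real.pi/(n:ℝ) := by
          rw [le_div_iff₀ hn0]
          rw [le_div_iff₀ hπ]
          have hnn : (n:ℝ) ≤ (n:ℝ)^2 := by nlinarith
          nlinarith [mul_lt_mul_of_pos_left hcase hL,
            mul_le_mul_of_nonneg_left hnn (by positivity : (0:ℝ) ≤ L*Real.pi)]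
        refine le_trans ?_ htail
        have : 0 ≤ L/Real.pi/(n:ℝ) := by positivity
        linarith
      · intro x hx
        rw [Complex.norm_exp]
        norm_num [Complex.mul_re, Complex.mul_im]
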